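/- Dunwoody's tree construction (existence and distance formula). Let V be a set and let 𝓔 be a nonempty collection of subsets of V such that: ∅ ∉ 𝓔; 𝓔 is complement-stable (e ∈ 𝓔 implies eᶜ ∈ 𝓔); 𝓔 is nested (for all e, f ∈ 𝓔, at least one of e∩f, e∩fᶜ, eᶜ∩f, eᶜ∩fᶜ is empty); and 𝓔 is finitely separating (for all v, w ∈ V the symmetric difference of {d ∈ 𝓔 : v ∈ d} and {d ∈ 𝓔 : w ∈ d} is finite). For e ∈ 𝓔 set ι(e) = {d ∈ 𝓔 : e ⊆ d or eᶜ ⊊ d} and τ(e) = {e, eᶜ}. Let T(𝓔) be the simple graph whose vertex set is {ι(e) : e ∈ 𝓔} ∪ {τ(e) : e ∈ 𝓔} (a set of subsets of the powerset of V) and in which x and y are adjacent if and only if there exists e ∈ 𝓔 with {x,y} = {ι(e), τ(e)}. Then T(𝓔) is a tree (connected and acyclic), and for all e, f ∈ 𝓔 the graph distance in T(𝓔) between ι(e) and ι(f) equals the cardinality of the symmetric difference ι(e) ∆ ι(f). -/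

import Mathlib

/-- `ι(e) = {d ∈ 𝓔 : e ⊆ d or eᶜ ⊊ d}`. -/
def dunwoodyIota {V : Type*} (𝓔 : Set (Set V)) (e : Set V) : Set (Set V) :=
  {d ∈ 𝓔 | e ⊆ d ∨ eᶜ ⊂ d}

/-- `τ(e) = {e, eᶜ}`. -/
def dunwoodyTau {V : Type*} (e : Set V) : Set (Set V) :=
  {e, eᶜ}

set_option linter.unusedSectionVars false
set_option linter.unusedVariables false

namespace Dun

variable {V : Type*}

structure Setup (𝓔 : Set (Set V)) : Prop where
  hempty : ∅ ∉ 𝓔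
  hcompl : ∀ e ∈ 𝓔, eᶜ ∈ 𝓔
  hnested : ∀ e ∈ 𝓔, ∀ f ∈ 𝓔,
      e ∩ f = ∅ ∨ e ∩ fᶜ = ∅ ∨ eᶜ ∩ f = ∅ ∨ eᶜ ∩ fᶜ = ∅
  hsep : ∀ v w : V, (symmDiff {d ∈ 𝓔 | v ∈ d} {d ∈ 𝓔 | w ∈ d}).Finite

variable {𝓔 : Set (Set V)} {H : Setup 𝓔}
include H

lemma ne_empty {e : Set V} (he : e ∈ 𝓔) : e ≠ ∅ := fun h => H.hempty (h ▸ he)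

lemma ne_univ {e : Set V} (he : e ∈ 𝓔) : e ≠ Set.univ := by
  intro h
  exact H.hempty (by simpa [h] using H.hcompl e he)

lemma not_compl_subset {e : Set V} (he : e ∈ 𝓔) : ¬ eᶜ ⊆ e := by
  intro h
  have : eᶜ = (∅ : Set V) := by
    ext x; simp only [Set.mem_empty_iff_false, iff_false]
    intro hx; exact hx (h hx)
  exact ne_univ (H:=H) he (by simpa [Set.compl_empty_iff] using this)

lemma not_subset_compl {e : Set V} (he : e ∈ 𝓔) : ¬ e ⊆ eᶜ := by
  intro h
  have : e = (∅ : Set V) := by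
    ext x; simp only [Set.mem_empty_iff_false, iff_false]
    intro hx; exact h hx hx
  exact ne_empty (H:=H) he this

/-- nestedness in subset form -/
lemma nested' {e f : Set V} (he : e ∈ 𝓔) (hf : f ∈ 𝓔) :
    e ⊆ fᶜ ∨ e ⊆ f ∨ f ⊆ e ∨ eᶜ ⊆ f := by
  rcases H.hnested e he f hf with h | h | h | h
  · exact Or.inl (by rw [← Set.disjoint_iff_inter_eq_empty] at h
                     exact h.subset_compl_right)
  · refine Or.inr (Or.inl ?_)
    rw [← Set.disjoint_iff_inter_eq_empty] at h
    simpa using h.subset_compl_right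
  · refine Or.inr (Or.inr (Or.inl ?_))
    rw [← Set.disjoint_iff_inter_eq_empty] at h
    simpa using h.symm.subset_compl_right
  · refine Or.inr (Or.inr (Or.inr ?_))
    rw [← Set.disjoint_iff_inter_eq_empty] at h
    simpa using h.subset_compl_right

lemma mem_iota_self {e : Set V} (he : e ∈ 𝓔) : e ∈ dunwoodyIota 𝓔 e :=
  ⟨he, Or.inl subset_rfl⟩

lemma compl_not_mem_iota {e : Set V} (he : e ∈ 𝓔) : eᶜ ∉ dunwoodyIota 𝓔 e := by
  rintro ⟨-, h | h⟩
  · exact not_subset_compl (H:=H) he h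
  · exact h.ne rfl

lemma iota_subset (e : Set V) : dunwoodyIota 𝓔 e ⊆ 𝓔 := fun d hd => hd.1


/-- at most one of `d`, `dᶜ` in `ι e` -/
lemma not_both {e d : Set V} (he : e ∈ 𝓔) (hd : d ∈ dunwoodyIota 𝓔 e)
    (hdc : dᶜ ∈ dunwoodyIota 𝓔 e) : False := by
  obtain ⟨hd𝓔, h1⟩ := hd
  obtain ⟨-, h2⟩ := hdc
  rcases h1 with h1 | h1 <;> rcases h2 with h2 | h2
  · exact ne_empty (H:=H) he (by
      have : e ⊆ d ∩ dᶜ := Set.subset_inter h1 h2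
      simpa using this)
  · -- e ⊆ d, eᶜ ⊂ dᶜ i.e. d ⊂ e
    have hde : d ⊂ e := by
      have := h2.subset
      have h3 : d ⊆ e := by simpa [Set.compl_subset_compl] using this
      refine ⟨h3, fun hed => h2.ne ?_⟩
      rw [Set.Subset.antisymm h3 hed]
    exact hde.not_subset h1
  · -- eᶜ ⊂ d, e ⊆ dᶜ i.e. d ⊆ eᶜ
    have h3 : d ⊆ eᶜ := by simpa [Set.subset_compl_comm] using h2
    exact h1.not_subset h3
  · -- eᶜ ⊂ d, eᶜ ⊂ dᶜ
    have h3 : d ⊆ e := by simpa [Set.compl_subset_compl] using h2.subset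
    exact not_compl_subset (H:=H) he (h1.subset.trans h3)

/-- at least one of `d`, `dᶜ` in `ι e` -/
lemma mem_or_compl_mem {e d : Set V} (he : e ∈ 𝓔) (hd : d ∈ 𝓔) :
    d ∈ dunwoodyIota 𝓔 e ∨ dᶜ ∈ dunwoodyIota 𝓔 e := by
  have hdc : dᶜ ∈ 𝓔 := H.hcompl d hd
  rcases nested' (H:=H) he hd with h | h | h | h
  · right
    exact ⟨hdc, Or.inl (by simpa [Set.subset_compl_comm] using h)⟩
  · left; exact ⟨hd, Or.inl h⟩
  · rcases eq_or_ne d e with rfl | hne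
    · left; exact mem_iota_self (H:=H) he
    · right
      refine ⟨hdc, Or.inr (Set.ssubset_iff_subset_ne.mpr
        ⟨Set.compl_subset_compl.mpr h, fun hc => hne ?_⟩)⟩
      simpa using (congrArg (·ᶜ) hc).symm
  · rcases eq_or_ne eᶜ d with rfl | hne
    · right
      exact ⟨hdc, Or.inl (by simp)⟩
    · left; exact ⟨hd, Or.inr (Set.ssubset_iff_subset_ne.mpr ⟨h, hne⟩)⟩

lemma compl_mem_iota_iff {e d : Set V} (he : e ∈ 𝓔) (hd : d ∈ 𝓔) :
    dᶜ ∈ dunwoodyIota 𝓔 e ↔ d ∉ dunwoodyIota 𝓔 e := by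
  constructor
  · intro h1 h2; exact not_both (H:=H) he h2 h1
  · intro h1
    rcases mem_or_compl_mem (H:=H) he hd with h | h
    · exact absurd h h1
    · exact h

/-- two members of `ι e` intersect -/
lemma iota_inter_nonempty {e d d' : Set V} (he : e ∈ 𝓔)
    (hd : d ∈ dunwoodyIota 𝓔 e) (hd' : d' ∈ dunwoodyIota 𝓔 e) :
    (d ∩ d').Nonempty := by
  obtain ⟨-, h1⟩ := hd
  obtain ⟨-, h2⟩ := hd'
  rcases h1 with h1 | h1 <;> rcases h2 with h2 | h2
  · obtain ⟨x, hx⟩ := Set.nonempty_iff_ne_empty.mpr (ne_empty (H:=H) he)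
    exact ⟨x, h1 hx, h2 hx⟩
  · obtain ⟨x, hx, hxe⟩ := Set.exists_of_ssubset h2
    simp only [Set.mem_compl_iff, not_not] at hxe
    exact ⟨x, h1 hxe, hx⟩
  · obtain ⟨x, hx, hxe⟩ := Set.exists_of_ssubset h1
    simp only [Set.mem_compl_iff, not_not] at hxe
    exact ⟨x, hx, h2 hxe⟩
  · have : eᶜ ≠ ∅ := by
      simpa [Set.compl_empty_iff] using ne_univ (H:=H) he
    obtain ⟨x, hx⟩ := Set.nonempty_iff_ne_empty.mpr this
    exact ⟨x, h1.subset hx, h2.subset hx⟩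

lemma iota_sdiff_iota_compl {e : Set V} (he : e ∈ 𝓔) :
    dunwoodyIota 𝓔 e \ dunwoodyIota 𝓔 eᶜ = {e} := by
  ext d
  simp only [Set.mem_diff, Set.mem_singleton_iff]
  constructor
  · rintro ⟨⟨hd𝓔, h1 | h1⟩, h2⟩
    · by_contra hne
      refine h2 ⟨hd𝓔, Or.inr ?_⟩
      rw [compl_compl]
      exact Set.ssubset_iff_subset_ne.mpr ⟨h1, fun h => hne h.symm⟩
    · exact absurd ⟨hd𝓔, Or.inl (by simpa using h1.subset)⟩ h2
  · rintro rfl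
    refine ⟨mem_iota_self (H:=H) he, ?_⟩
    rintro ⟨-, h | h⟩
    · exact not_compl_subset (H:=H) he h
    · simp at h

lemma iota_ne_tau {e f : Set V} (he : e ∈ 𝓔) (hf : f ∈ 𝓔) :
    dunwoodyIota 𝓔 e ≠ dunwoodyTau f := by
  intro h
  have hmem : e ∈ dunwoodyTau f := h ▸ mem_iota_self (H:=H) he
  rcases hmem with rfl | hmem
  · exact compl_not_mem_iota (H:=H) he (h ▸ (by simp [dunwoodyTau] : eᶜ ∈ dunwoodyTau e))
  · simp only [Set.mem_singleton_iff] at hmem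
    subst hmem
    have : fᶜᶜ ∈ dunwoodyTau f := by simp [dunwoodyTau]
    rw [← h] at this
    exact compl_not_mem_iota (H:=H) he (by simpa using this)

lemma iota_ne_iota_compl {e : Set V} (he : e ∈ 𝓔) :
    dunwoodyIota 𝓔 e ≠ dunwoodyIota 𝓔 eᶜ := by
  intro h
  have h1 := mem_iota_self (H:=H) he
  rw [h] at h1
  have : eᶜᶜ ∈ dunwoodyIota 𝓔 eᶜ := by
    rw [compl_compl]; exact h1
  exact compl_not_mem_iota (H:=H) (H.hcompl e he) this

lemma tau_iota_inj {e f : Set V} (he : e ∈ 𝓔) (hf : f ∈ 𝓔)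
    (ht : dunwoodyTau e = dunwoodyTau f) (hi : dunwoodyIota 𝓔 e = dunwoodyIota 𝓔 f) :
    e = f := by
  have : e ∈ dunwoodyTau f := ht ▸ (by simp [dunwoodyTau] : e ∈ dunwoodyTau e)
  rcases this with rfl | hmem
  · rfl
  · simp only [Set.mem_singleton_iff] at hmem
    subst hmem
    exact (iota_ne_iota_compl (H:=H) hf hi.symm).elim


lemma diff_finite {e f : Set V} (he : e ∈ 𝓔) (hf : f ∈ 𝓔) :
    (dunwoodyIota 𝓔 e \ dunwoodyIota 𝓔 f).Finite := by
  obtain ⟨a, ha⟩ := Set.nonempty_iff_ne_empty.mpr (ne_empty (H:=H) he)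
  obtain ⟨b, hb⟩ : (eᶜ).Nonempty := Set.nonempty_iff_ne_empty.mpr
    (by simpa [Set.compl_empty_iff] using ne_univ (H:=H) he)
  obtain ⟨c, hc⟩ := Set.nonempty_iff_ne_empty.mpr (ne_empty (H:=H) hf)
  obtain ⟨k, hk⟩ : (fᶜ).Nonempty := Set.nonempty_iff_ne_empty.mpr
    (by simpa [Set.compl_empty_iff] using ne_univ (H:=H) hf)
  set s : V → V → Set (Set V) := fun v w => {d ∈ 𝓔 | v ∈ d} \ {d ∈ 𝓔 | w ∈ d} with hs
  have hfin : ∀ v w, (s v w).Finite := by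
    intro v w
    refine (H.hsep v w).subset ?_
    rw [Set.symmDiff_def]
    exact Set.subset_union_left
  refine (((hfin a k).union (hfin a c)).union ((hfin b k).union (hfin b c))).subset ?_
  rintro d ⟨⟨hd𝓔, hd1⟩, hd2⟩
  have h1 : e ⊆ d ∨ eᶜ ⊆ d := by
    rcases hd1 with h | h
    · exact Or.inl h
    · exact Or.inr h.subset
  have h2 : d ⊆ f ∨ d ⊆ fᶜ := by
    rcases nested' (H:=H) hf hd𝓔 with h | h | h | h
    · exact Or.inr (by rwa [Set.subset_compl_comm] at h)
    · exact absurd ⟨hd𝓔, Or.inl h⟩ hd2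
    · exact Or.inl h
    · rcases eq_or_ne fᶜ d with rfl | hne
      · exact Or.inr subset_rfl
      · exact absurd ⟨hd𝓔, Or.inr (Set.ssubset_iff_subset_ne.mpr ⟨h, hne⟩)⟩ hd2
  rcases h1 with h1 | h1 <;> rcases h2 with h2 | h2
  · exact Or.inl (Or.inl ⟨⟨hd𝓔, h1 ha⟩, fun hmem => hk (h2 hmem.2)⟩)
  · exact Or.inl (Or.inr ⟨⟨hd𝓔, h1 ha⟩, fun hmem => (h2 hmem.2) hc⟩)
  · exact Or.inr (Or.inl ⟨⟨hd𝓔, h1 hb⟩, fun hmem => hk (h2 hmem.2)⟩)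
  · exact Or.inr (Or.inr ⟨⟨hd𝓔, h1 hb⟩, fun hmem => (h2 hmem.2) hc⟩)

lemma symmdiff_finite {e f : Set V} (he : e ∈ 𝓔) (hf : f ∈ 𝓔) :
    (symmDiff (dunwoodyIota 𝓔 e) (dunwoodyIota 𝓔 f)).Finite := by
  rw [Set.symmDiff_def]
  exact (diff_finite (H:=H) he hf).union (diff_finite (H:=H) hf he)

lemma sdiff_chain {e f d d' : Set V} (he : e ∈ 𝓔) (hf : f ∈ 𝓔)
    (hd : d ∈ dunwoodyIota 𝓔 e \ dunwoodyIota 𝓔 f)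
    (hd' : d' ∈ dunwoodyIota 𝓔 e \ dunwoodyIota 𝓔 f) :
    d ⊆ d' ∨ d' ⊆ d := by
  have hd𝓔 : d ∈ 𝓔 := hd.1.1
  have hd'𝓔 : d' ∈ 𝓔 := hd'.1.1
  have hnon : (d ∩ d').Nonempty := iota_inter_nonempty (H:=H) he hd.1 hd'.1
  rcases nested' (H:=H) hd𝓔 hd'𝓔 with h | h | h | h
  · obtain ⟨x, hx1, hx2⟩ := hnon
    exact absurd hx2 (h hx1)
  · exact Or.inl h
  · exact Or.inr h
  · -- dᶜ ⊆ d'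
    exfalso
    rcases eq_or_ne dᶜ d' with rfl | hne
    · exact not_both (H:=H) he hd.1 hd'.1
    have hss : dᶜ ⊂ d' := Set.ssubset_iff_subset_ne.mpr ⟨h, hne⟩
    have hdcf : dᶜ ∈ dunwoodyIota 𝓔 f := (compl_mem_iota_iff (H:=H) hf hd𝓔).mpr hd.2
    have hdf : d ⊆ f := by
      rcases hdcf.2 with h' | h'
      · exact absurd ⟨hd'𝓔, Or.inl (h'.trans hss.subset)⟩ hd'.2
      · exact Set.compl_subset_compl.mp h'.subset
    have hd'cf : d'ᶜ ∈ dunwoodyIota 𝓔 f := (compl_mem_iota_iff (H:=H) hf hd'𝓔).mpr hd'.2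
    have hd'f : d' ⊆ f := by
      rcases hd'cf.2 with h' | h'
      · have : d'ᶜ ⊆ d := by rwa [Set.compl_subset_comm] at h
        exact absurd ⟨hd𝓔, Or.inl (h'.trans this)⟩ hd.2
      · exact Set.compl_subset_compl.mp h'.subset
    have : f = Set.univ := by
      rw [← Set.univ_subset_iff]
      intro x _
      by_cases hx : x ∈ d
      · exact hdf hx
      · exact hd'f (h hx)
    exact ne_univ (H:=H) hf this

lemma exists_gate {e f : Set V} (he : e ∈ 𝓔) (hf : f ∈ 𝓔)
    (hS : (dunwoodyIota 𝓔 e \ dunwoodyIota 𝓔 f).Nonempty) :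
    ∃ g, g ∈ 𝓔 ∧ g ∈ dunwoodyIota 𝓔 e ∧ g ∉ dunwoodyIota 𝓔 f ∧
      dunwoodyIota 𝓔 g = dunwoodyIota 𝓔 e := by
  obtain ⟨g, hgS, hgmin⟩ : ∃ g ∈ dunwoodyIota 𝓔 e \ dunwoodyIota 𝓔 f,
      ∀ d ∈ dunwoodyIota 𝓔 e \ dunwoodyIota 𝓔 f, d ⊆ g → g = d := by
    obtain ⟨g, hg⟩ := (diff_finite (H:=H) he hf).exists_minimal hS
    exact ⟨g, hg.1, fun d hd h => Set.Subset.antisymm (hg.2 hd h) h⟩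
  have hleast : ∀ d ∈ dunwoodyIota 𝓔 e \ dunwoodyIota 𝓔 f, g ⊆ d := by
    intro d hd
    rcases sdiff_chain (H:=H) he hf hd hgS with h | h
    · exact (hgmin d hd h).le
    · exact h
  have hg𝓔 : g ∈ 𝓔 := hgS.1.1
  refine ⟨g, hg𝓔, hgS.1, hgS.2, ?_⟩
  apply Set.Subset.antisymm
  · -- ι g ⊆ ι e
    intro d hd
    by_contra hde
    have hd𝓔 : d ∈ 𝓔 := hd.1
    have hdg : d ≠ g := fun h => hde (h ▸ hgS.1)
    have hdce : dᶜ ∈ dunwoodyIota 𝓔 e := (compl_mem_iota_iff (H:=H) he hd𝓔).mpr hde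
    by_cases hdcf : dᶜ ∈ dunwoodyIota 𝓔 f
    · have hnon : (g ∩ dᶜ).Nonempty := iota_inter_nonempty (H:=H) he hgS.1 hdce
      rcases nested' (H:=H) hg𝓔 hd𝓔 with h | h | h | h
      · -- g ⊆ dᶜ
        exact not_both (H:=H) hg𝓔 hd ⟨H.hcompl d hd𝓔, Or.inl h⟩
      · -- g ⊆ d
        obtain ⟨x, hx1, hx2⟩ := hnon
        exact hx2 (h hx1)
      · -- d ⊆ g
        rcases hd.2 with h' | h'
        · exact hdg (Set.Subset.antisymm h h')
        · exact not_compl_subset (H:=H) hg𝓔 (h'.subset.trans h)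
      · -- gᶜ ⊆ d, i.e. dᶜ ⊆ g
        have hsub : dᶜ ⊆ g := by rwa [Set.compl_subset_comm] at h
        rcases eq_or_ne dᶜ g with heq | hne
        · exact hgS.2 (heq ▸ hdcf)
        · rcases hdcf.2 with h' | h'
          · exact hgS.2 ⟨hg𝓔, Or.inl (h'.trans hsub)⟩
          · exact hgS.2 ⟨hg𝓔, Or.inr (h'.trans_subset hsub)⟩
    · have : dᶜ ∈ dunwoodyIota 𝓔 e \ dunwoodyIota 𝓔 f := ⟨hdce, hdcf⟩
      have hsub := hleast dᶜ this
      exact not_both (H:=H) hg𝓔 hd ⟨H.hcompl d hd𝓔, Or.inl hsub⟩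
  · -- ι e ⊆ ι g
    intro d hd
    have hd𝓔 : d ∈ 𝓔 := hd.1
    by_cases hdf : d ∈ dunwoodyIota 𝓔 f
    · rcases eq_or_ne d g with rfl | hdg
      · exact mem_iota_self (H:=H) hg𝓔
      have hnon : (d ∩ g).Nonempty := iota_inter_nonempty (H:=H) he hd hgS.1
      rcases nested' (H:=H) hd𝓔 hg𝓔 with h | h | h | h
      · obtain ⟨x, hx1, hx2⟩ := hnon
        exact absurd hx2 (h hx1)
      · -- d ⊆ g, d ≠ g
        exfalso
        have hss : d ⊂ g := Set.ssubset_iff_subset_ne.mpr ⟨h, hdg⟩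
        rcases hdf.2 with h' | h'
        · exact hgS.2 ⟨hg𝓔, Or.inl (h'.trans hss.subset)⟩
        · exact hgS.2 ⟨hg𝓔, Or.inr (h'.trans hss)⟩
      · exact ⟨hd𝓔, Or.inl h⟩
      · -- dᶜ ⊆ g, i.e. gᶜ ⊆ d
        have hsub : gᶜ ⊆ d := by rwa [Set.compl_subset_comm] at h
        rcases eq_or_ne gᶜ d with heq | hne
        · exact absurd (heq ▸ hd) (fun hh => not_both (H:=H) he hgS.1 hh)
        · exact ⟨hd𝓔, Or.inr (Set.ssubset_iff_subset_ne.mpr ⟨hsub, hne⟩)⟩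
    · exact ⟨hd𝓔, Or.inl (hleast d ⟨hd, hdf⟩)⟩


variable (𝓔) in
/-- the graph -/
def graph : SimpleGraph {x : Set (Set V) //
    (∃ e ∈ 𝓔, x = dunwoodyIota 𝓔 e) ∨ ∃ e ∈ 𝓔, x = dunwoodyTau e} :=
  SimpleGraph.fromRel (fun x y => ∃ e ∈ 𝓔, x.1 = dunwoodyIota 𝓔 e ∧ y.1 = dunwoodyTau e)

variable (𝓔) in
open Classical in
/-- potential function on vertices -/
noncomputable def mu (x : Set (Set V)) : Set (Set V) :=
  if ∃ h ∈ 𝓔, x = dunwoodyTau h then {d ∈ 𝓔 | ∃ h ∈ x, h ⊂ d} else x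

lemma mu_iota {e : Set V} (he : e ∈ 𝓔) : mu 𝓔 (dunwoodyIota 𝓔 e) = dunwoodyIota 𝓔 e := by
  rw [mu, if_neg]
  rintro ⟨h, hh, heq⟩
  exact iota_ne_tau (H:=H) he hh heq

lemma mu_tau {e : Set V} (he : e ∈ 𝓔) :
    mu 𝓔 (dunwoodyTau e) = dunwoodyIota 𝓔 e \ {e} := by
  rw [mu, if_pos ⟨e, he, rfl⟩]
  ext d
  simp only [Set.mem_setOf_eq, Set.mem_diff, Set.mem_singleton_iff, dunwoodyTau]
  constructor
  · rintro ⟨hd𝓔, h, (rfl | rfl), hss⟩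
    · exact ⟨⟨hd𝓔, Or.inl hss.subset⟩, fun hde => hss.ne hde.symm⟩
    · refine ⟨⟨hd𝓔, Or.inr hss⟩, fun hde => ?_⟩
      subst hde
      exact not_compl_subset (H:=H) he hss.subset
  · rintro ⟨⟨hd𝓔, h1 | h1⟩, hne⟩
    · exact ⟨hd𝓔, e, Or.inl rfl, Set.ssubset_iff_subset_ne.mpr ⟨h1, fun h => hne h.symm⟩⟩
    · exact ⟨hd𝓔, eᶜ, Or.inr rfl, h1⟩

lemma symmdiff_mu_iota_tau {e : Set V} (he : e ∈ 𝓔) :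
    symmDiff (mu 𝓔 (dunwoodyIota 𝓔 e)) (mu 𝓔 (dunwoodyTau e)) = {e} := by
  rw [mu_iota (H:=H) he, mu_tau (H:=H) he]
  ext d
  simp only [Set.mem_symmDiff, Set.mem_diff, Set.mem_singleton_iff]
  constructor
  · rintro (⟨h1, h2⟩ | ⟨⟨h1, h2⟩, h3⟩)
    · by_contra hne
      exact h2 ⟨h1, hne⟩
    · exact absurd h1 h3
  · rintro rfl
    exact Or.inl ⟨mem_iota_self (H:=H) he, fun h => h.2 rfl⟩

lemma adj_iff {x y} : (graph 𝓔).Adj x y ↔ ∃ e ∈ 𝓔,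
    ({x.1, y.1} : Set (Set (Set V))) = {dunwoodyIota 𝓔 e, dunwoodyTau e} := by
  constructor
  · rintro ⟨hne, ⟨e, he, hx, hy⟩ | ⟨e, he, hy, hx⟩⟩
    · exact ⟨e, he, by rw [hx, hy]⟩
    · exact ⟨e, he, by rw [hx, hy, Set.pair_comm]⟩
  · rintro ⟨e, he, hpair⟩
    rcases Set.pair_eq_pair_iff.mp hpair with ⟨hx, hy⟩ | ⟨hx, hy⟩
    · refine ⟨fun h => iota_ne_tau (H:=H) he he ?_, Or.inl ⟨e, he, hx, hy⟩⟩
      rw [← hx, ← hy, h]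
    · refine ⟨fun h => iota_ne_tau (H:=H) he he ?_, Or.inr ⟨e, he, hy, hx⟩⟩
      rw [← hy, ← hx, h]

lemma adj_data {x y} (h : (graph 𝓔).Adj x y) :
    ∃ g ∈ 𝓔, symmDiff (mu 𝓔 x.1) (mu 𝓔 y.1) = {g} ∧
      Sym2.map Subtype.val s(x, y) = s(dunwoodyIota 𝓔 g, dunwoodyTau g) := by
  obtain ⟨g, hg, hpair⟩ := (adj_iff (H:=H)).mp h
  rcases Set.pair_eq_pair_iff.mp hpair with ⟨hx, hy⟩ | ⟨hx, hy⟩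
  · refine ⟨g, hg, ?_, ?_⟩
    · rw [hx, hy]; exact symmdiff_mu_iota_tau (H:=H) hg
    · rw [Sym2.map_pair_eq, hx, hy]
  · refine ⟨g, hg, ?_, ?_⟩
    · rw [hx, hy, symmDiff_comm]; exact symmdiff_mu_iota_tau (H:=H) hg
    · rw [Sym2.map_pair_eq, hx, hy, Sym2.eq_swap]

variable (𝓔) in
/-- the set of `g`'s whose edge occurs in a walk -/
def egs {x y} (p : (graph 𝓔).Walk x y) : Set (Set V) :=
  {g | g ∈ 𝓔 ∧ s(dunwoodyIota 𝓔 g, dunwoodyTau g) ∈ p.edges.map (Sym2.map Subtype.val)}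

lemma trail_spec {x y} (p : (graph 𝓔).Walk x y) (hp : p.IsTrail) :
    symmDiff (mu 𝓔 x.1) (mu 𝓔 y.1) = egs 𝓔 p ∧ (egs 𝓔 p).Finite ∧
      (egs 𝓔 p).ncard = p.length := by
  induction p with
  | nil =>
    have hnil : ∀ (u : {x : Set (Set V) //
        (∃ e ∈ 𝓔, x = dunwoodyIota 𝓔 e) ∨ ∃ e ∈ 𝓔, x = dunwoodyTau e}),
        egs 𝓔 (SimpleGraph.Walk.nil (G := graph 𝓔) (u := u)) = ∅ := by
      intro u; ext g; simp [egs]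
    rw [hnil]
    simp [symmDiff_self, Set.bot_eq_empty]
  | @cons x z y h q ih =>
    rw [SimpleGraph.Walk.isTrail_cons] at hp
    obtain ⟨hq, hnotmem⟩ := hp
    obtain ⟨hsd', hfin', hcard'⟩ := ih hq
    obtain ⟨g₀, hg₀𝓔, hsd, hsym⟩ := adj_data (H:=H) h
    have hg₀new : g₀ ∉ egs 𝓔 q := by
      rintro ⟨-, hmem⟩
      obtain ⟨ed, hed, hedeq⟩ := List.mem_map.mp hmem
      have : ed = s(x, z) := by
        apply Sym2.map.injective Subtype.val_injective
        rw [hedeq, ← hsym]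
      exact hnotmem (this ▸ hed)
    have hegs : egs 𝓔 (SimpleGraph.Walk.cons h q) = insert g₀ (egs 𝓔 q) := by
      ext g
      simp only [egs, Set.mem_setOf_eq, SimpleGraph.Walk.edges_cons, List.map_cons,
        List.mem_cons, Set.mem_insert_iff]
      constructor
      · rintro ⟨hg𝓔, heq | hmem⟩
        · rw [hsym] at heq
          rcases Sym2.eq_iff.mp heq with ⟨hi, ht⟩ | ⟨hi, ht⟩
          · exact Or.inl (tau_iota_inj (H:=H) hg𝓔 hg₀𝓔 ht hi)
          · exact absurd hi (iota_ne_tau (H:=H) hg𝓔 hg₀𝓔)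
        · exact Or.inr ⟨hg𝓔, hmem⟩
      · rintro (rfl | ⟨hg𝓔, hmem⟩)
        · exact ⟨hg₀𝓔, Or.inl hsym.symm⟩
        · exact ⟨hg𝓔, Or.inr hmem⟩
    have hstep : symmDiff (mu 𝓔 x.1) (mu 𝓔 y.1) = symmDiff {g₀} (egs 𝓔 q) := by
      rw [← hsd', ← hsd, symmDiff_assoc, symmDiff_symmDiff_cancel_left]
    have hins : symmDiff ({g₀} : Set (Set V)) (egs 𝓔 q) = insert g₀ (egs 𝓔 q) := by
      ext d
      simp only [Set.mem_symmDiff, Set.mem_singleton_iff, Set.mem_insert_iff]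
      constructor
      · rintro (⟨rfl, -⟩ | ⟨hd, -⟩)
        · exact Or.inl rfl
        · exact Or.inr hd
      · rintro (rfl | hd)
        · exact Or.inl ⟨rfl, hg₀new⟩
        · exact Or.inr ⟨hd, fun hh => hg₀new (hh ▸ hd)⟩
    refine ⟨by rw [hstep, hins, hegs], hegs ▸ hfin'.insert g₀, ?_⟩
    rw [hegs, Set.ncard_insert_of_notMem hg₀new hfin', hcard',
      SimpleGraph.Walk.length_cons]


omit H in
lemma tau_compl (g : Set V) : dunwoodyTau gᶜ = dunwoodyTau g := by
  simp [dunwoodyTau, Set.pair_comm]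

lemma walk_exists : ∀ n : ℕ, ∀ e f : Set V, ∀ (he : e ∈ 𝓔) (hf : f ∈ 𝓔),
    (symmDiff (dunwoodyIota 𝓔 e) (dunwoodyIota 𝓔 f)).ncard = n →
    ∃ p : (graph 𝓔).Walk ⟨dunwoodyIota 𝓔 e, Or.inl ⟨e, he, rfl⟩⟩
      ⟨dunwoodyIota 𝓔 f, Or.inl ⟨f, hf, rfl⟩⟩, p.length = n := by
  intro n
  induction n using Nat.strong_induction_on with
  | _ n ih =>
  intro e f he hf hcard
  by_cases hEq : dunwoodyIota 𝓔 e = dunwoodyIota 𝓔 f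
  · have hv : (⟨dunwoodyIota 𝓔 e, Or.inl ⟨e, he, rfl⟩⟩ :
        {x : Set (Set V) // (∃ e ∈ 𝓔, x = dunwoodyIota 𝓔 e) ∨ ∃ e ∈ 𝓔, x = dunwoodyTau e}) =
        ⟨dunwoodyIota 𝓔 f, Or.inl ⟨f, hf, rfl⟩⟩ := Subtype.ext hEq
    refine ⟨SimpleGraph.Walk.nil.copy rfl hv, ?_⟩
    rw [SimpleGraph.Walk.length_copy, SimpleGraph.Walk.length_nil, ← hcard, hEq]
    simp [symmDiff_self, Set.bot_eq_empty]
  · -- the symmetric difference is nonempty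
    have hSne : (dunwoodyIota 𝓔 e \ dunwoodyIota 𝓔 f).Nonempty := by
      have hne : (symmDiff (dunwoodyIota 𝓔 e) (dunwoodyIota 𝓔 f)).Nonempty := by
        rw [Set.nonempty_iff_ne_empty]
        intro hc
        exact hEq (by simpa [Set.bot_eq_empty] using symmDiff_eq_bot.mp hc)
      obtain ⟨d, hd⟩ := hne
      rcases Set.mem_symmDiff.mp hd with ⟨h1, h2⟩ | ⟨h1, h2⟩
      · exact ⟨d, h1, h2⟩
      · have hd𝓔 : d ∈ 𝓔 := h1.1
        refine ⟨dᶜ, (compl_mem_iota_iff (H:=H) he hd𝓔).mpr h2, fun hc => ?_⟩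
        exact (compl_mem_iota_iff (H:=H) hf hd𝓔).mp hc h1
    obtain ⟨g, hg𝓔, hgι, hgf, hgeq⟩ := exists_gate (H:=H) he hf hSne
    have hgc𝓔 : gᶜ ∈ 𝓔 := H.hcompl g hg𝓔
    have hgcf : gᶜ ∈ dunwoodyIota 𝓔 f := (compl_mem_iota_iff (H:=H) hf hg𝓔).mpr hgf
    have hgce : gᶜ ∉ dunwoodyIota 𝓔 e := fun h => not_both (H:=H) he hgι h
    have hA : symmDiff (dunwoodyIota 𝓔 g) (dunwoodyIota 𝓔 gᶜ) = {g, gᶜ} := by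
      have h2 := iota_sdiff_iota_compl (H:=H) hgc𝓔
      rw [compl_compl] at h2
      rw [Set.symmDiff_def, iota_sdiff_iota_compl (H:=H) hg𝓔, h2]
      rw [Set.singleton_union]
    have hB : dunwoodyIota 𝓔 gᶜ = symmDiff (dunwoodyIota 𝓔 g) {g, gᶜ} := by
      rw [← hA, symmDiff_symmDiff_cancel_left]
    have hsubset : ({g, gᶜ} : Set (Set V)) ⊆ symmDiff (dunwoodyIota 𝓔 e) (dunwoodyIota 𝓔 f) := by
      rintro d (rfl | rfl)
      · exact Set.mem_symmDiff.mpr (Or.inl ⟨hgι, hgf⟩)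
      · exact Set.mem_symmDiff.mpr (Or.inr ⟨hgcf, hgce⟩)
    have hkey : symmDiff (dunwoodyIota 𝓔 gᶜ) (dunwoodyIota 𝓔 f) =
        symmDiff (dunwoodyIota 𝓔 e) (dunwoodyIota 𝓔 f) \ {g, gᶜ} := by
      rw [hB, hgeq, symmDiff_right_comm]
      rw [Set.symmDiff_def (s := symmDiff (dunwoodyIota 𝓔 e) (dunwoodyIota 𝓔 f))]
      rw [Set.diff_eq_empty.mpr hsubset, Set.union_empty]
    have hgne : g ≠ gᶜ := by
      intro h
      exact not_subset_compl (H:=H) hg𝓔 (h ▸ subset_rfl)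
    have hfinD := symmdiff_finite (H:=H) he hf
    have hn2 : 2 ≤ n := by
      rw [← hcard, ← Set.ncard_pair hgne]
      exact Set.ncard_le_ncard hsubset hfinD
    have hcard2 : (symmDiff (dunwoodyIota 𝓔 gᶜ) (dunwoodyIota 𝓔 f)).ncard = n - 2 := by
      rw [hkey, Set.ncard_diff hsubset ((Set.finite_singleton gᶜ).insert g), hcard, Set.ncard_pair hgne]
    obtain ⟨p', hp'⟩ := ih (n - 2) (by omega) gᶜ f hgc𝓔 hf hcard2
    have adj1 : (graph 𝓔).Adj ⟨dunwoodyIota 𝓔 e, Or.inl ⟨e, he, rfl⟩⟩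
        ⟨dunwoodyTau g, Or.inr ⟨g, hg𝓔, rfl⟩⟩ := by
      refine ⟨fun hh => iota_ne_tau (H:=H) he hg𝓔 (congrArg Subtype.val hh), ?_⟩
      exact Or.inl ⟨g, hg𝓔, hgeq.symm, rfl⟩
    have adj2 : (graph 𝓔).Adj ⟨dunwoodyTau g, Or.inr ⟨g, hg𝓔, rfl⟩⟩
        ⟨dunwoodyIota 𝓔 gᶜ, Or.inl ⟨gᶜ, hgc𝓔, rfl⟩⟩ := by
      refine ⟨fun hh => iota_ne_tau (H:=H) hgc𝓔 hg𝓔 (congrArg Subtype.val hh).symm, ?_⟩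
      exact Or.inr ⟨gᶜ, hgc𝓔, rfl, (tau_compl g).symm⟩
    refine ⟨SimpleGraph.Walk.cons adj1 (SimpleGraph.Walk.cons adj2 p'), ?_⟩
    simp only [SimpleGraph.Walk.length_cons, hp']
    omega

lemma reach_iota {e f : Set V} (he : e ∈ 𝓔) (hf : f ∈ 𝓔) :
    (graph 𝓔).Reachable ⟨dunwoodyIota 𝓔 e, Or.inl ⟨e, he, rfl⟩⟩
      ⟨dunwoodyIota 𝓔 f, Or.inl ⟨f, hf, rfl⟩⟩ := by
  obtain ⟨p, -⟩ := walk_exists (H:=H)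
    (symmDiff (dunwoodyIota 𝓔 e) (dunwoodyIota 𝓔 f)).ncard e f he hf rfl
  exact ⟨p⟩

lemma reach_to_iota (x : {x : Set (Set V) //
    (∃ e ∈ 𝓔, x = dunwoodyIota 𝓔 e) ∨ ∃ e ∈ 𝓔, x = dunwoodyTau e}) :
    ∃ e, ∃ he : e ∈ 𝓔,
      (graph 𝓔).Reachable x ⟨dunwoodyIota 𝓔 e, Or.inl ⟨e, he, rfl⟩⟩ := by
  rcases x.2 with ⟨e, he, hx⟩ | ⟨e, he, hx⟩
  · refine ⟨e, he, ?_⟩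
    have : x = ⟨dunwoodyIota 𝓔 e, Or.inl ⟨e, he, rfl⟩⟩ := Subtype.ext hx
    rw [this]
  · refine ⟨e, he, SimpleGraph.Adj.reachable ?_⟩
    refine ⟨fun hh => iota_ne_tau (H:=H) he he ?_, Or.inr ⟨e, he, rfl, hx⟩⟩
    rw [← hx]
    exact (congrArg Subtype.val hh).symm

lemma connected (hne : 𝓔.Nonempty) : (graph 𝓔).Connected := by
  obtain ⟨e₀, he₀⟩ := hne
  have hnv : Nonempty {x : Set (Set V) //
      (∃ e ∈ 𝓔, x = dunwoodyIota 𝓔 e) ∨ ∃ e ∈ 𝓔, x = dunwoodyTau e} :=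
    ⟨⟨dunwoodyIota 𝓔 e₀, Or.inl ⟨e₀, he₀, rfl⟩⟩⟩
  refine SimpleGraph.Connected.mk ?_
  intro x y
  obtain ⟨e, he, hxe⟩ := reach_to_iota (H:=H) x
  obtain ⟨f, hf, hyf⟩ := reach_to_iota (H:=H) y
  exact (hxe.trans (reach_iota (H:=H) he hf)).trans hyf.symm

lemma acyclic : (graph 𝓔).IsAcyclic := by
  intro v c hc
  obtain ⟨hsd, -, -⟩ := trail_spec (H:=H) c hc.isCircuit.isTrail
  have hempty : egs 𝓔 c = ∅ := by
    rw [← hsd, symmDiff_self]; rfl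
  cases c with
  | nil => exact hc.ne_nil rfl
  | cons h q =>
    obtain ⟨g₀, hg₀𝓔, -, hsym⟩ := adj_data (H:=H) h
    have : g₀ ∈ egs 𝓔 (SimpleGraph.Walk.cons h q) := by
      refine ⟨hg₀𝓔, ?_⟩
      rw [SimpleGraph.Walk.edges_cons, List.map_cons]
      exact List.mem_cons.mpr (Or.inl hsym.symm)
    rw [hempty] at this
    exact this

lemma dist_eq {e f : Set V} (hne : 𝓔.Nonempty) (he : e ∈ 𝓔) (hf : f ∈ 𝓔) :
    (graph 𝓔).dist ⟨dunwoodyIota 𝓔 e, Or.inl ⟨e, he, rfl⟩⟩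
      ⟨dunwoodyIota 𝓔 f, Or.inl ⟨f, hf, rfl⟩⟩ =
    (symmDiff (dunwoodyIota 𝓔 e) (dunwoodyIota 𝓔 f)).ncard := by
  obtain ⟨p, hp⟩ := (reach_iota (H:=H) he hf).exists_walk_length_eq_dist
  have hpath := p.isPath_of_length_eq_dist hp
  obtain ⟨hsd, -, hcard⟩ := trail_spec (H:=H) p hpath.isTrail
  rw [← hp, ← hcard, ← hsd]
  simp only [mu_iota (H:=H) he, mu_iota (H:=H) hf]

end Dun


/-- **Dunwoody's tree construction (existence and distance formula).** -/
theorem dunwoody_tree {V : Type*} (𝓔 : Set (Set V))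
    (hne : 𝓔.Nonempty) (hempty : ∅ ∉ 𝓔)
    (hcompl : ∀ e ∈ 𝓔, eᶜ ∈ 𝓔)
    (hnested : ∀ e ∈ 𝓔, ∀ f ∈ 𝓔,
      e ∩ f = ∅ ∨ e ∩ fᶜ = ∅ ∨ eᶜ ∩ f = ∅ ∨ eᶜ ∩ fᶜ = ∅)
    (hsep : ∀ v w : V, (symmDiff {d ∈ 𝓔 | v ∈ d} {d ∈ 𝓔 | w ∈ d}).Finite) :
    ∃ T : SimpleGraph {x : Set (Set V) //
        (∃ e ∈ 𝓔, x = dunwoodyIota 𝓔 e) ∨ ∃ e ∈ 𝓔, x = dunwoodyTau e},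
      (∀ x y, T.Adj x y ↔ ∃ e ∈ 𝓔,
        ({x.1, y.1} : Set (Set (Set V))) = {dunwoodyIota 𝓔 e, dunwoodyTau e}) ∧
      T.IsTree ∧
      ∀ e (he : e ∈ 𝓔) f (hf : f ∈ 𝓔),
        T.dist ⟨dunwoodyIota 𝓔 e, Or.inl ⟨e, he, rfl⟩⟩
            ⟨dunwoodyIota 𝓔 f, Or.inl ⟨f, hf, rfl⟩⟩ =
          (symmDiff (dunwoodyIota 𝓔 e) (dunwoodyIota 𝓔 f)).ncard := by
  have H : Dun.Setup 𝓔 := ⟨hempty, hcompl, hnested, hsep⟩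
  exact ⟨Dun.graph 𝓔, fun x y => Dun.adj_iff (H:=H),
    ⟨Dun.connected (H:=H) hne, Dun.acyclic (H:=H)⟩,
    fun e he f hf => Dun.dist_eq (H:=H) hne he hf⟩
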